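/- Let B be a locally large band and let x₁, …, xₙ, y₁, …, y_m ∈ B all be pairwise 𝒟-equivalent, lying in the single 𝒟-class B_α of B (which is a rectangular sub-band of B). Then x̄₁⋯x̄ₙ = ȳ₁⋯ȳ_m in IG(B_α) if and only if x̄₁⋯x̄ₙ = ȳ₁⋯ȳ_m in IG(B). -/

import Mathlib

/-! Common definitions: free idempotent generated semigroups over bands,
generalised Green's relations, and abundancy notions. -/

/-- `(e, f)` is a *basic pair* if `ef ∈ {e,f}` or `fe ∈ {e,f}`. -/
def basicPair {B : Type*} [Mul B] (e f : B) : Prop :=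
  e * f = e ∨ e * f = f ∨ f * e = e ∨ f * e = f

/-- The defining congruence of the free idempotent generated semigroup `IG B`:
the congruence on the free semigroup on `{ē : e ∈ B}` generated by the relations
`ē f̄ = (ef)‾` for basic pairs `(e, f)`. -/
def igCon (B : Type*) [Semigroup B] : Con (FreeSemigroup B) :=
  conGen fun w₁ w₂ => ∃ e f : B, basicPair e f ∧
    w₁ = FreeSemigroup.of e * FreeSemigroup.of f ∧ w₂ = FreeSemigroup.of (e * f)

/-- The free idempotent generated semigroup over a band `B`. -/
abbrev IG (B : Type*) [Semigroup B] := (igCon B).Quotient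

/-- The canonical generator `ē` of `IG B`. -/
def igOf {B : Type*} [Semigroup B] (e : B) : IG B :=
  ((FreeSemigroup.of e : FreeSemigroup B) : (igCon B).Quotient)

/-- `prodSeq x a b = x a * x (a+1) * ⋯ * x b` (it is `x a` when `b ≤ a`). -/
def prodSeq {M : Type*} [Mul M] (x : ℕ → M) (a b : ℕ) : M :=
  (List.range (b - a)).foldl (fun acc i => acc * x (a + i + 1)) (x a)

/-- The word `x̄_a x̄_{a+1} ⋯ x̄_b` in the free semigroup on `{ē : e ∈ B}`. -/
def freeWord {B : Type*} (x : ℕ → B) (a b : ℕ) : FreeSemigroup B :=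
  prodSeq (fun i => FreeSemigroup.of (x i)) a b

/-- The element `x̄_a x̄_{a+1} ⋯ x̄_b` of `IG B`. -/
def igWord {B : Type*} [Semigroup B] (x : ℕ → B) (a b : ℕ) : IG B :=
  ((freeWord x a b : FreeSemigroup B) : (igCon B).Quotient)

/-- Green's relation `𝓡`: `a 𝓡 b` iff `a = b` or `as = b`, `bt = a` for some `s, t`. -/
def GreenR {S : Type*} [Semigroup S] (a b : S) : Prop :=
  a = b ∨ ∃ s t : S, a * s = b ∧ b * t = a

/-- Green's relation `𝓛`: `a 𝓛 b` iff `a = b` or `sa = b`, `tb = a` for some `s, t`. -/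
def GreenL {S : Type*} [Semigroup S] (a b : S) : Prop :=
  a = b ∨ ∃ s t : S, s * a = b ∧ t * b = a

/-- `a 𝓡* b` iff for all `x, y ∈ S¹`, `xa = ya ↔ xb = yb`. -/
def RStar {S : Type*} [Semigroup S] (a b : S) : Prop :=
  ∀ x y : WithOne S,
    x * (a : WithOne S) = y * (a : WithOne S) ↔ x * (b : WithOne S) = y * (b : WithOne S)

/-- `a 𝓛* b` iff for all `x, y ∈ S¹`, `ax = ay ↔ bx = by`. -/
def LStar {S : Type*} [Semigroup S] (a b : S) : Prop :=
  ∀ x y : WithOne S,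
    (a : WithOne S) * x = (a : WithOne S) * y ↔ (b : WithOne S) * x = (b : WithOne S) * y

/-- `a 𝓡̃ b` iff for every idempotent `e`, `ea = a ↔ eb = b`. -/
def RTilde {S : Type*} [Semigroup S] (a b : S) : Prop :=
  ∀ e : S, IsIdempotentElem e → (e * a = a ↔ e * b = b)

/-- `a 𝓛̃ b` iff for every idempotent `e`, `ae = a ↔ be = b`. -/
def LTilde {S : Type*} [Semigroup S] (a b : S) : Prop :=
  ∀ e : S, IsIdempotentElem e → (a * e = a ↔ b * e = b)

/-- A semigroup is *abundant* if every `𝓡*`-class and every `𝓛*`-class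
contains an idempotent. -/
def Abundant (S : Type*) [Semigroup S] : Prop :=
  ∀ a : S, (∃ e : S, IsIdempotentElem e ∧ RStar a e) ∧
    (∃ e : S, IsIdempotentElem e ∧ LStar a e)

/-- A semigroup is *weakly abundant* if every `𝓡̃`-class and every `𝓛̃`-class
contains an idempotent. -/
def WeaklyAbundant (S : Type*) [Semigroup S] : Prop :=
  ∀ a : S, (∃ e : S, IsIdempotentElem e ∧ RTilde a e) ∧
    (∃ e : S, IsIdempotentElem e ∧ LTilde a e)

/-- On a band, `x` and `y` are `𝒟`-equivalent iff `xyx = x` and `yxy = y`. -/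
def dEquiv {B : Type*} [Mul B] (x y : B) : Prop :=
  x * y * x = x ∧ y * x * y = y

/-- On a band, `x` and `y` are `𝒥`-incomparable iff `xyx ≠ x` and `yxy ≠ y`. -/
def jIncomp {B : Type*} [Mul B] (x y : B) : Prop :=
  x * y * x ≠ x ∧ y * x * y ≠ y

/-- One step of the reduction system induced by the presentation of `IG B`:
replace a factor `ē f̄`, with `(e,f)` a basic pair, by `(ef)‾`. -/
def RedStep {B : Type*} [Semigroup B] (w w' : FreeSemigroup B) : Prop :=
  ∃ (p q : List B) (e f : B), basicPair e f ∧
    w.head :: w.tail = p ++ e :: f :: q ∧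
    w'.head :: w'.tail = p ++ (e * f) :: q

/-- A word is in *normal form* (irreducible) if no reduction step applies. -/
def IsNF {B : Type*} [Semigroup B] (w : FreeSemigroup B) : Prop :=
  ∀ w', ¬ RedStep w w'

/-- `x̄₁ ⋯ x̄ₙ` (letters `x 1, …, x n`) is in *almost normal form* witnessed by
block boundaries `idx 0 = 0 < idx 1 < ⋯ < idx r = n`: within each block all
letters are `𝒟`-equivalent, and letters in adjacent blocks are incomparable. -/
def AlmostNF {B : Type*} [Mul B] (x : ℕ → B) (n r : ℕ) (idx : ℕ → ℕ) : Prop :=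
  1 ≤ r ∧ idx 0 = 0 ∧ idx r = n ∧
  (∀ k < r, idx k < idx (k + 1)) ∧
  (∀ k < r, ∀ p q : ℕ, idx k < p → p ≤ idx (k + 1) → idx k < q → q ≤ idx (k + 1) →
    dEquiv (x p) (x q)) ∧
  (∀ k : ℕ, k + 1 < r → ∀ p q : ℕ, idx k < p → p ≤ idx (k + 1) →
    idx (k + 1) < q → q ≤ idx (k + 2) → jIncomp (x p) (x q))

/-- Condition (P) for `IG B`. -/
def CondP (B : Type*) [Semigroup B] : Prop :=
  ∀ (n m r : ℕ) (u v : ℕ → B) (iu iv : ℕ → ℕ),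
    AlmostNF u n r iu → AlmostNF v m r iv →
    igWord u 1 n = igWord v 1 m →
    ((∀ s : ℕ, 1 ≤ s → s ≤ r →
        (u (iu s) * v (iv s) = u (iu s) ∧ v (iv s) * u (iu s) = v (iv s)) →
        igWord u 1 (iu s) = igWord v 1 (iv s)) ∧
      (∀ t : ℕ, t + 1 ≤ r →
        (u (iu t + 1) * v (iv t + 1) = v (iv t + 1) ∧
          v (iv t + 1) * u (iu t + 1) = u (iu t + 1)) →
        igWord u (iu t + 1) n = igWord v (iv t + 1) m))

/-- A normal band is *pliant* if for every `𝒟`-class `D` there is `c ∈ D` with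
`u e u = c` for every `e ∈ D` and every `u` strictly `𝒥`-above `D`. -/
def Pliant (B : Type*) [Mul B] : Prop :=
  ∀ d : B, ∃ c : B, dEquiv c d ∧
    ∀ e u : B, dEquiv e d → (e * u * e = e ∧ u * e * u ≠ u) → u * e * u = c

/-! ### Auxiliary development -/

section Psi
variable {B : Type*} [Semigroup B]

open Classical in
noncomputable def psi (C : Subsemigroup B) (a : B) (e : B) : WithZero (WithOne (IG C)) :=
  if h : e ∈ C then WithZero.coe (WithOne.coe (igOf (⟨e, h⟩ : C)))
  else if a * e * a = a then WithZero.coe (1 : WithOne (IG C)) else 0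

theorem psi_mem (C : Subsemigroup B) (a : B) {e : B} (h : e ∈ C) :
    psi C a e = WithZero.coe (WithOne.coe (igOf (⟨e, h⟩ : C))) := by
  unfold psi; rw [dif_pos h]

theorem psi_one (C : Subsemigroup B) (a : B) {e : B} (h1 : e ∉ C) (h2 : a * e * a = a) :
    psi C a e = WithZero.coe (1 : WithOne (IG C)) := by
  unfold psi; rw [dif_neg h1, if_pos h2]

theorem psi_zero (C : Subsemigroup B) (a : B) {e : B} (h1 : e ∉ C) (h2 : a * e * a ≠ a) :
    psi C a e = 0 := by
  unfold psi; rw [dif_neg h1, if_neg h2]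

end Psi

section Band
variable {B : Type*} [Semigroup B]

theorem bandB2 (hband : ∀ x : B, x * x = x) {a e f : B} (h1 : e * a * e = e) (h2 : f * a = a) : e * f * e = e := by
  have k1 : e * f * (a * e) = e := by
    calc e * f * (a * e) = e * (f * a) * e := by simp only [mul_assoc]
    _ = e * a * e := by rw [h2]
    _ = e := h1
  calc e * f * e = e * f * (e * f * (a * e)) := by rw [k1]
  _ = (e * f) * (e * f) * (a * e) := by rw [← mul_assoc]
  _ = (e * f) * (a * e) := by rw [hband (e * f)]
  _ = e := k1

theorem bandB3 {a e f : B} (hfa : f * a = a) (haf : a * f = a) (h : f * e * f = f)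
    (he1 : e * a * e = e) : f = a := by
  have hfea : f * e * a = a := by
    calc f * e * a = f * e * (f * a) := by rw [hfa]
    _ = (f * e * f) * a := by simp only [mul_assoc]
    _ = f * a := by rw [h]
    _ = a := hfa
  have haef : a * e * f = a := by
    calc a * e * f = (a * f) * e * f := by rw [haf]
    _ = a * (f * e * f) := by simp only [mul_assoc]
    _ = a * f := by rw [h]
    _ = a := haf
  calc f = f * e * f := h.symm
  _ = f * (e * a * e) * f := by rw [he1]
  _ = (f * e * a) * (e * f) := by simp only [mul_assoc]
  _ = a * (e * f) := by rw [hfea]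
  _ = a := by rw [← mul_assoc, haef]

theorem bandL4a (hband : ∀ x : B, x * x = x) {a e f : B} (hae : a * e = a) (haf : a * f = a) : a * (e * f) * a = a := by
  calc a * (e * f) * a = ((a * e) * f) * a := by rw [← mul_assoc]
  _ = (a * f) * a := by rw [hae]
  _ = a * a := by rw [haf]
  _ = a := hband a

theorem bandL4b {a e f : B} (hae : a * e = a) (hea : e * a = a) (haf : a * f = a)
    (hfa : f * a = a) (hd : (e * f) * a * (e * f) = e * f) : e * f = a := by
  have : (e * f) * a * (e * f) = a := by
    calc (e * f) * a * (e * f) = (e * (f * a)) * (e * f) := by simp only [mul_assoc]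
    _ = (e * a) * (e * f) := by rw [hfa]
    _ = a * (e * f) := by rw [hea]
    _ = (a * e) * f := by rw [← mul_assoc]
    _ = a * f := by rw [hae]
    _ = a := haf
  exact hd.symm.trans this

theorem bandL5a (hband : ∀ x : B, x * x = x) {a e f : B} (H : a * (e * f) * a = a) : a * e * a = a := by
  have H' : a * e * f * a = a := by
    rw [show a * e * f * a = a * (e * f) * a by simp only [mul_assoc]]; exact H
  calc a * e * a = a * e * (a * e * f * a) := by rw [H']
  _ = ((a * e) * (a * e)) * (f * a) := by simp only [mul_assoc]
  _ = (a * e) * (f * a) := by rw [hband (a * e)]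
  _ = a := by rw [show (a * e) * (f * a) = a * e * f * a by simp only [mul_assoc]]; exact H'

theorem bandL5b (hband : ∀ x : B, x * x = x) {a e f : B} (H : a * (e * f) * a = a) : a * f * a = a := by
  have H' : a * e * f * a = a := by
    rw [show a * e * f * a = a * (e * f) * a by simp only [mul_assoc]]; exact H
  calc a * f * a = (a * e * f * a) * f * a := by rw [H']
  _ = (a * e) * ((f * a) * (f * a)) := by simp only [mul_assoc]
  _ = (a * e) * (f * a) := by rw [hband (f * a)]
  _ = a := by rw [show (a * e) * (f * a) = a * e * f * a by simp only [mul_assoc]]; exact H'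

end Band

theorem igOf_mul_basic {M : Type*} [Semigroup M] {u v : M} (h : basicPair u v) :
    igOf u * igOf v = igOf (u * v) := by
  rw [igOf, igOf, igOf, ← Con.coe_mul]
  exact Con.eq _ |>.mpr (ConGen.Rel.of _ _ ⟨u, v, h, rfl, rfl⟩)

theorem hom_psi {B : Type*} [Semigroup B] (hband : ∀ x : B, x * x = x)
    (hLL : ∀ p q : B, p * q * p = p → q * p * q ≠ q → p * q = p ∧ q * p = p)
    (C : Subsemigroup B) (a : B) (ha : a ∈ C)
    (hC : ∀ z : B, z ∈ C ↔ (z * a * z = z ∧ a * z * a = a))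
    (e f : B) (hbp : basicPair e f) :
    psi C a e * psi C a f = psi C a (e * f) := by
  by_cases he : e ∈ C
  · by_cases hf : f ∈ C
    · -- both in C
      have hef : e * f ∈ C := mul_mem he hf
      have hbpC : basicPair (⟨e, he⟩ : C) ⟨f, hf⟩ := by
        rcases hbp with h | h | h | h
        · exact Or.inl (Subtype.ext h)
        · exact Or.inr (Or.inl (Subtype.ext h))
        · exact Or.inr (Or.inr (Or.inl (Subtype.ext h)))
        · exact Or.inr (Or.inr (Or.inr (Subtype.ext h)))
      have key := igOf_mul_basic hbpC
      rw [psi_mem C a he, psi_mem C a hf, psi_mem C a hef, ← WithZero.coe_mul,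
        ← WithOne.coe_mul, key]
      rfl
    · by_cases hAf : a * f * a = a
      · -- e ∈ C, f strictly above
        have hfnf : f * a * f ≠ f := fun h => hf ((hC f).mpr ⟨h, hAf⟩)
        obtain ⟨haf, hfa⟩ := hLL a f hAf hfnf
        obtain ⟨he1, he2⟩ := (hC e).mp he
        have hefe : e * f * e = e := bandB2 hband he1 hfa
        have hfef : f * e * f ≠ f := fun h => hf ((bandB3 hfa haf h he1) ▸ ha)
        obtain ⟨hef, -⟩ := hLL e f hefe hfef
        rw [psi_one C a hf hAf, hef, WithZero.coe_one, mul_one]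
      · -- e ∈ C, f 'other'
        rw [psi_zero C a hf hAf, mul_zero]
        have hne : a * (e * f) * a ≠ a := fun H => hAf (bandL5b hband H)
        exact (psi_zero C a (fun h => hne ((hC _).mp h).2) hne).symm
  · by_cases hAe : a * e * a = a
    · have hene : e * a * e ≠ e := fun h => he ((hC e).mpr ⟨h, hAe⟩)
      obtain ⟨hae, hea⟩ := hLL a e hAe hene
      by_cases hf : f ∈ C
      · -- e strictly above, f ∈ C
        obtain ⟨hf1, hf2⟩ := (hC f).mp hf
        have hfef : f * e * f = f := bandB2 hband hf1 hea
        have hefe : e * f * e ≠ e := fun h => he ((bandB3 hea hae h hf1) ▸ ha)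
        obtain ⟨-, hef⟩ := hLL f e hfef hefe
        rw [psi_one C a he hAe, hef, WithZero.coe_one, one_mul]
      · by_cases hAf : a * f * a = a
        · -- both strictly above
          have hfnf : f * a * f ≠ f := fun h => hf ((hC f).mpr ⟨h, hAf⟩)
          obtain ⟨haf, hfa⟩ := hLL a f hAf hfnf
          have hA : a * (e * f) * a = a := bandL4a hband hae haf
          have hnC : e * f ∉ C := by
            intro h
            have hd := ((hC _).mp h).1
            have hEq : e * f = a := bandL4b hae hea haf hfa hd
            rcases hbp with h1 | h1 | h1 | h1
            · exact he ((h1.symm.trans hEq) ▸ ha)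
            · exact hf ((h1.symm.trans hEq) ▸ ha)
            · have hk : a * e = e := by
                calc a * e = (e * f) * e := by rw [hEq]
                _ = e * (f * e) := mul_assoc _ _ _
                _ = e * e := by rw [h1]
                _ = e := hband e
              exact he ((hae.symm.trans hk) ▸ ha)
            · have hk : f * a = f := by
                calc f * a = f * (e * f) := by rw [hEq]
                _ = (f * e) * f := (mul_assoc _ _ _).symm
                _ = f * f := by rw [h1]
                _ = f := hband f
              exact hf ((hfa.symm.trans hk) ▸ ha)
          rw [psi_one C a he hAe, psi_one C a hf hAf, psi_one C a hnC hA,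
            WithZero.coe_one, one_mul]
        · -- e strictly above, f 'other'
          rw [psi_zero C a hf hAf, mul_zero]
          have hne : a * (e * f) * a ≠ a := fun H => hAf (bandL5b hband H)
          exact (psi_zero C a (fun h => hne ((hC _).mp h).2) hne).symm
    · -- e 'other'
      rw [psi_zero C a he hAe, zero_mul]
      have hne : a * (e * f) * a ≠ a := fun H => hAe (bandL5a hband H)
      exact (psi_zero C a (fun h => hne ((hC _).mp h).2) hne).symm


section Assemble
variable {B : Type*} [Semigroup B]

theorem map_prodSeq {M N : Type*} [Semigroup M] [Semigroup N] (g : M →ₙ* N) (x : ℕ → M)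
    (s t : ℕ) : g (prodSeq x s t) = prodSeq (fun i => g (x i)) s t := by
  unfold prodSeq
  generalize t - s = k
  induction k with
  | zero => simp
  | succ k ih => rw [List.range_succ, List.foldl_append, List.foldl_append,
      List.foldl_cons, List.foldl_cons, List.foldl_nil, List.foldl_nil, map_mul, ih]

/-- The quotient map as a `MulHom`. -/
def igMk (M : Type*) [Semigroup M] : FreeSemigroup M →ₙ* IG M :=
  ⟨fun w => (w : (igCon M).Quotient), fun x y => Con.coe_mul x y⟩

theorem igWord_eq {M : Type*} [Semigroup M] (x : ℕ → M) (s t : ℕ) :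
    igWord x s t = prodSeq (fun i => igOf (x i)) s t :=
  map_prodSeq (igMk M) (fun i => FreeSemigroup.of (x i)) s t

/-- The coercion `IG C → WithZero (WithOne (IG C))` as a `MulHom`. -/
def theta (C : Subsemigroup B) : IG C →ₙ* WithZero (WithOne (IG C)) :=
  ⟨fun q => WithZero.coe (WithOne.coe q), fun x y => by
    show WithZero.coe (WithOne.coe (x * y)) = _
    rw [WithOne.coe_mul, WithZero.coe_mul]⟩

theorem theta_injective (C : Subsemigroup B) : Function.Injective (theta C) := fun p q h =>
  WithOne.coe_inj.mp (WithZero.coe_inj.mp h)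

theorem IG_locally_large_band_Dclass_words'
    {B : Type*} [Semigroup B] (hband : ∀ x : B, x * x = x)
    (hLL : ∀ p q : B, p * q * p = p → q * p * q ≠ q → p * q = p ∧ q * p = p)
    (C : Subsemigroup B) (a : B) (ha : a ∈ C)
    (hC : ∀ z : B, z ∈ C ↔ (z * a * z = z ∧ a * z * a = a))
    (n m : ℕ) (x y : ℕ → C) :
    igWord x 1 n = igWord y 1 m ↔
      igWord (fun i => (x i : B)) 1 n = igWord (fun i => (y i : B)) 1 m := by
  -- the forward map
  set ν : FreeSemigroup C →ₙ* IG B := FreeSemigroup.lift (fun u : C => igOf (u : B)) with hν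
  have hνker : igCon C ≤ Con.ker ν := by
    apply Con.conGen_le.mpr
    rintro w₁ w₂ ⟨u, v, hbp, rfl, rfl⟩
    show ν _ = ν _
    rw [map_mul, FreeSemigroup.lift_of, FreeSemigroup.lift_of, FreeSemigroup.lift_of]
    refine igOf_mul_basic ?_
    rcases hbp with h | h | h | h
    · exact Or.inl (congrArg Subtype.val h)
    · exact Or.inr (Or.inl (congrArg Subtype.val h))
    · exact Or.inr (Or.inr (Or.inl (congrArg Subtype.val h)))
    · exact Or.inr (Or.inr (Or.inr (congrArg Subtype.val h)))
  have hνword : ∀ (z : ℕ → C) (s t : ℕ),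
      ν (freeWord z s t) = igWord (fun i => (z i : B)) s t := by
    intro z s t
    rw [freeWord, map_prodSeq, igWord_eq]
    congr 1
  -- the backward map
  set Φ : FreeSemigroup B →ₙ* WithZero (WithOne (IG C)) :=
    FreeSemigroup.lift (psi C a) with hΦ
  have hΦker : igCon B ≤ Con.ker Φ := by
    apply Con.conGen_le.mpr
    rintro w₁ w₂ ⟨e, f, hbp, rfl, rfl⟩
    show Φ _ = Φ _
    rw [map_mul, FreeSemigroup.lift_of, FreeSemigroup.lift_of, FreeSemigroup.lift_of]
    exact hom_psi hband hLL C a ha hC e f hbp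
  have hΦword : ∀ (z : ℕ → C) (s t : ℕ),
      Φ (freeWord (fun i => (z i : B)) s t) = theta C (igWord z s t) := by
    intro z s t
    rw [freeWord, map_prodSeq, igWord_eq, map_prodSeq]
    congr 1
    funext i
    show Φ (FreeSemigroup.of ((z i : B))) = theta C (igOf (z i))
    rw [hΦ, FreeSemigroup.lift_of]
    exact psi_mem C a (z i).2
  constructor
  · intro H
    have h1 : igCon C (freeWord x 1 n) (freeWord y 1 m) := (Con.eq _).mp H
    have h2 : ν (freeWord x 1 n) = ν (freeWord y 1 m) := hνker h1
    rwa [hνword, hνword] at h2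
  · intro H
    have h1 : igCon B (freeWord (fun i => (x i : B)) 1 n) (freeWord (fun i => (y i : B)) 1 m) :=
      (Con.eq _).mp H
    have h2 : Φ (freeWord (fun i => (x i : B)) 1 n) = Φ (freeWord (fun i => (y i : B)) 1 m) :=
      hΦker h1
    rw [hΦword, hΦword] at h2
    exact theta_injective C h2
end Assemble

/-- Let `B` be a locally large band and let `C` be a
`𝒟`-class of `B` (a rectangular sub-band). For words with all letters in `C`,
equality in `IG C` is equivalent to equality in `IG B`. -/
theorem IG_locally_large_band_Dclass_words
    {B : Type*} [Semigroup B] (hband : ∀ x : B, x * x = x)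
    (hLL : ∀ p q : B, p * q * p = p → q * p * q ≠ q → p * q = p ∧ q * p = p)
    (C : Subsemigroup B) (a : B) (ha : a ∈ C)
    (hC : ∀ z : B, z ∈ C ↔ dEquiv z a)
    (n m : ℕ) (hn : 1 ≤ n) (hm : 1 ≤ m) (x y : ℕ → C) :
    igWord x 1 n = igWord y 1 m ↔
      igWord (fun i => (x i : B)) 1 n = igWord (fun i => (y i : B)) 1 m := by
  exact IG_locally_large_band_Dclass_words' hband hLL C a ha hC n m x y
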